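/- Let F^λ[G] be a twisted group algebra of characteristic p > 0 such that either F^λ[G]^[m] = 0 or F^λ[G]^(m) = 0 for some m, and let p^t ≥ m. If a ∈ G is a p-element and c ∈ G is a q-element for a prime q ≠ p, then a and c commute in G and λ(a,c) = λ(c,a). -/

import Mathlib

/-- Additive subgroup generated by products `s * t` with `s ∈ S`, `t ∈ T`. -/
def aprod {R : Type*} [NonUnitalRing R] (S T : AddSubgroup R) : AddSubgroup R :=
  AddSubgroup.closure {x : R | ∃ s ∈ S, ∃ t ∈ T, x = s * t}

/-- Additive subgroup generated by Lie commutators `s*t - t*s`. -/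
def lbrk {R : Type*} [NonUnitalRing R] (S T : AddSubgroup R) : AddSubgroup R :=
  AddSubgroup.closure {x : R | ∃ s ∈ S, ∃ t ∈ T, x = s * t - t * s}

/-- The lower Lie central series `γ₁(R) = R`, `γₙ(R) = [γₙ₋₁(R), R]`. -/
def lieGamma (R : Type*) [NonUnitalRing R] : ℕ → AddSubgroup R
  | 0 => ⊤
  | 1 => ⊤
  | n + 2 => lbrk (lieGamma R (n + 1)) ⊤

/-- The `n`-th lower Lie power `R^[n] = γₙ(R)·R`. -/
def lowerLiePow (R : Type*) [NonUnitalRing R] (n : ℕ) : AddSubgroup R :=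
  aprod (lieGamma R n) ⊤

/-- The `n`-th upper Lie power: `R^(1) = R`, `R^(n) = [R^(n-1), R]·R`. -/
def upperLiePow (R : Type*) [NonUnitalRing R] : ℕ → AddSubgroup R
  | 0 => ⊤
  | 1 => ⊤
  | n + 2 => aprod (lbrk (upperLiePow R (n + 1)) ⊤) ⊤

lemma lbrk_mono {R : Type*} [NonUnitalRing R] {S S' T : AddSubgroup R} (h : S ≤ S') :
    lbrk S T ≤ lbrk S' T := by
  apply AddSubgroup.closure_mono
  rintro x ⟨u, hu, v, hv, rfl⟩
  exact ⟨u, h hu, v, hv, rfl⟩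

lemma self_le_aprod_top {R : Type*} [Ring R] (S : AddSubgroup R) : S ≤ aprod S ⊤ := by
  intro x hx
  exact AddSubgroup.subset_closure ⟨x, hx, 1, trivial, (mul_one x).symm⟩

lemma lieGamma_succ_le (R : Type*) [NonUnitalRing R] :
    ∀ n, lieGamma R (n + 1) ≤ lieGamma R n
  | 0 => le_rfl
  | 1 => le_top
  | n + 2 => lbrk_mono (lieGamma_succ_le R (n + 1))

lemma lieGamma_antitone (R : Type*) [NonUnitalRing R] {m n : ℕ} (h : m ≤ n) :
    lieGamma R n ≤ lieGamma R m :=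
  antitone_nat_of_succ_le (lieGamma_succ_le R) h

lemma lieGamma_le_upperLiePow (R : Type*) [Ring R] :
    ∀ n, lieGamma R n ≤ upperLiePow R n
  | 0 => le_rfl
  | 1 => le_rfl
  | n + 2 =>
    le_trans (lbrk_mono (lieGamma_le_upperLiePow R (n + 1))) (self_le_aprod_top _)

/-- An iterated Lie bracket `(ad y)^n x` lies in `γ_{n+1}`. -/
lemma adPow_mem_lieGamma {F : Type*} [Field F] {A : Type*} [Ring A] [Algebra F A]
    (y : A) : ∀ (n : ℕ) (x : A),
    ((LinearMap.mulLeft F y - LinearMap.mulRight F y) ^ n) x ∈ lieGamma A (n + 1)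
  | 0, x => by simp [lieGamma]
  | n + 1, x => by
    rw [pow_succ']
    set z := ((LinearMap.mulLeft F y - LinearMap.mulRight F y) ^ n) x with hz
    have hzmem : z ∈ lieGamma A (n + 1) := adPow_mem_lieGamma y n x
    have : (LinearMap.mulLeft F y - LinearMap.mulRight F y) z = -(z * y - y * z) := by
      simp [LinearMap.sub_apply, neg_sub]
    show (LinearMap.mulLeft F y - LinearMap.mulRight F y) z ∈ lieGamma A (n + 2)
    rw [this]
    exact neg_mem (AddSubgroup.subset_closure ⟨z, hzmem, y, trivial, rfl⟩)

/-- In an (upper or lower) Lie nilpotent twisted group algebra of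
characteristic `p > 0` with `pᵗ ≥ m`, every `p`-element `a` commutes with every
`q`-element `c` (for a prime `q ≠ p`), and `λ(a,c) = λ(c,a)`. -/
theorem stmt_19 {F : Type*} [Field F] {G : Type*} [Group G]
    {A : Type*} [Ring A] [Algebra F A]
    (l : G → G → Fˣ) (B : Module.Basis G F A)
    (hone : B 1 = 1)
    (hmul : ∀ g h : G, B g * B h = ((l g h : F)) • B (g * h))
    (hcoc : ∀ a b c : G, l a (b * c) * l b c = l (a * b) c * l a b)
    (hnorm : ∀ g : G, l g 1 = 1 ∧ l 1 g = 1)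
    (p : ℕ) [Fact p.Prime] [CharP F p]
    (m t : ℕ) (hLie : lowerLiePow A m = ⊥ ∨ upperLiePow A m = ⊥)
    (hmt : m ≤ p ^ t)
    (q : ℕ) (hq : q.Prime) (hqp : q ≠ p)
    (a c : G) (s s' : ℕ) (ha : orderOf a = p ^ s) (hc : orderOf c = q ^ s') :
    a * c = c * a ∧ l a c = l c a := by
  classical
  haveI : Nontrivial A := nontrivial_of_ne (B a) 0 (B.ne_zero a)
  -- γ_m(A) = 0
  have hγm : lieGamma A m = ⊥ := by
    rcases hLie with h | h
    · exact le_bot_iff.mp (h ▸ self_le_aprod_top _)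
    · exact le_bot_iff.mp (h ▸ lieGamma_le_upperLiePow A m)
  have hγ : lieGamma A (p ^ t + 1) = ⊥ :=
    le_bot_iff.mp (hγm ▸ lieGamma_antitone A (le_trans hmt (Nat.le_succ _)))
  -- p^t-th powers are central
  haveI : CharP (Module.End F A) p :=
    charP_of_injective_algebraMap' F (A := Module.End F A) p
  have hcenter : ∀ y x : A, y ^ p ^ t * x = x * y ^ p ^ t := by
    intro y x
    have hmem := adPow_mem_lieGamma (F := F) y (p ^ t) x
    rw [sub_pow_char_pow_of_commute p t (LinearMap.commute_mulLeft_right y y),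
      LinearMap.pow_mulLeft, LinearMap.pow_mulRight, hγ] at hmem
    have h0 : y ^ p ^ t * x - x * y ^ p ^ t = 0 := by
      simpa [LinearMap.sub_apply] using hmem
    exact sub_eq_zero.mp h0
  -- powers of basis vectors are unit multiples of basis vectors
  have hpow : ∀ (g : G) (n : ℕ), ∃ u : F, u ≠ 0 ∧ (B g) ^ n = u • B (g ^ n) := by
    intro g n
    induction n with
    | zero => exact ⟨1, one_ne_zero, by simp [hone]⟩
    | succ n ih =>
      obtain ⟨u, hu, h⟩ := ih
      refine ⟨u * (l (g ^ n) g : F), mul_ne_zero hu (l (g ^ n) g).ne_zero, ?_⟩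
      rw [pow_succ, h, smul_mul_assoc, hmul, smul_smul, pow_succ]
  -- find b with b ^ p^t = c
  have hcop : (p ^ t).Coprime (orderOf c) := by
    rw [hc]
    exact Nat.Coprime.pow t s' ((Nat.coprime_primes (Fact.out (p := p.Prime)) hq).mpr (Ne.symm hqp))
  obtain ⟨k, hk⟩ := exists_pow_eq_self_of_coprime hcop
  have hbc : (c ^ k) ^ p ^ t = c := by rw [← pow_right_comm]; exact hk
  obtain ⟨u, hu, hBu⟩ := hpow (c ^ k) (p ^ t)
  rw [hbc] at hBu
  -- B c commutes with B a
  have hBcomm : B c * B a = B a * B c := by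
    have := hcenter (B (c ^ k)) (B a)
    rw [hBu, smul_mul_assoc, mul_smul_comm] at this
    exact smul_right_injective A hu this
  rw [hmul, hmul] at hBcomm
  have hkey' := congrArg B.repr hBcomm
  rw [map_smul, map_smul, B.repr_self, B.repr_self] at hkey'
  have hkey := DFunLike.congr_fun hkey' (c * a)
  rw [Finsupp.smul_apply, Finsupp.smul_apply, Finsupp.single_apply, Finsupp.single_apply,
    smul_eq_mul, smul_eq_mul] at hkey
  have hmemb : a * c = c * a := by
    by_contra hne
    rw [if_pos rfl, if_neg (fun h : a * c = c * a => hne h)] at hkey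
    simp only [mul_one, mul_zero] at hkey
    exact (l c a).ne_zero hkey
  refine ⟨hmemb, ?_⟩
  rw [if_pos rfl, if_pos hmemb] at hkey
  simp only [mul_one] at hkey
  exact Units.ext hkey.symm
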